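/- Let Y = T₁ ∪ T₂ ⊆ ℝ³ with T₁ the closed triangle with vertices (0,0,0), (0,-1,0), (-1,-1,0) and T₂ the closed triangle with vertices (0,0,0), (-1,-1,0), (-1,-1,-1), with the subspace Euclidean topology and coordinatewise order. The meet operation ∧ : Y × Y → Y is not continuous at the point ((0,0,0), (0,-1,0)). -/

import Mathlib

def T₁ : Set (ℝ × ℝ × ℝ) :=
  convexHull ℝ {((0:ℝ), (0:ℝ), (0:ℝ)), (0, -1, 0), (-1, -1, 0)}

def T₂ : Set (ℝ × ℝ × ℝ) :=
  convexHull ℝ {((0:ℝ), (0:ℝ), (0:ℝ)), (-1, -1, 0), (-1, -1, -1)}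

def Y : Set (ℝ × ℝ × ℝ) := T₁ ∪ T₂

lemma hT1 : T₁ ⊆ {p : ℝ × ℝ × ℝ | p.2.2 = 0} := by
  apply convexHull_min
  · intro p hp
    simp only [Set.mem_insert_iff, Set.mem_singleton_iff] at hp
    rcases hp with h | h | h <;> simp [h]
  · intro x hx y hy a b ha hb hab
    simp only [Set.mem_setOf_eq] at *
    simp [Prod.smul_def, smul_eq_mul, hx, hy]

lemma hT2 : T₂ ⊆ {p : ℝ × ℝ × ℝ | p.1 = p.2.1 ∧ -1 ≤ p.1} := by
  apply convexHull_min
  · intro p hp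
    simp only [Set.mem_insert_iff, Set.mem_singleton_iff] at hp
    rcases hp with h | h | h <;> simp [h]
  · intro x hx y hy a b ha hb hab
    simp only [Set.mem_setOf_eq] at *
    constructor
    · simp [Prod.smul_def, smul_eq_mul, hx.1, hy.1]
    · simp only [Prod.fst_add, Prod.smul_fst, smul_eq_mul]
      nlinarith [hx.2, hy.2]

lemma memY (t : ℝ) (h0 : 0 ≤ t) (h1 : t ≤ 1) : ((-t, -t, -t) : ℝ × ℝ × ℝ) ∈ Y := by
  have hseg : ((-t, -t, -t) : ℝ × ℝ × ℝ) ∈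
      segment ℝ (((0:ℝ), (0:ℝ), (0:ℝ)) : ℝ × ℝ × ℝ) (((-1:ℝ), (-1:ℝ), (-1:ℝ)) : ℝ × ℝ × ℝ) := by
    refine ⟨1 - t, t, by linarith, h0, by ring, ?_⟩
    simp [Prod.ext_iff, Prod.smul_def, smul_eq_mul]
  exact Or.inr (segment_subset_convexHull (by simp) (by simp) hseg)

theorem stmt_8 (m : ↥Y → ↥Y → ↥Y)
    (hm : ∀ x y : ↥Y, (m x y).val ≤ x.val ∧ (m x y).val ≤ y.val ∧
      ∀ z : ↥Y, z.val ≤ x.val → z.val ≤ y.val → z.val ≤ (m x y).val) :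
    ¬ ContinuousAt (fun p : ↥Y × ↥Y => m p.1 p.2)
      (⟨((0:ℝ), (0:ℝ), (0:ℝ)), Or.inl (subset_convexHull ℝ _ (by simp))⟩,
       ⟨((0:ℝ), (-1:ℝ), (0:ℝ)), Or.inl (subset_convexHull ℝ _ (by simp))⟩) := by
  intro hc
  set P₁ : ↥Y := ⟨((0:ℝ), (0:ℝ), (0:ℝ)), Or.inl (subset_convexHull ℝ _ (by simp))⟩
  set P₂ : ↥Y := ⟨((0:ℝ), (-1:ℝ), (0:ℝ)), Or.inl (subset_convexHull ℝ _ (by simp))⟩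
  -- value at the point is (0,-1,0)
  have hval : (m P₁ P₂).val = ((0:ℝ), (-1:ℝ), (0:ℝ)) := by
    have h := hm P₁ P₂
    have h1 : (m P₁ P₂).val ≤ ((0:ℝ), (-1:ℝ), (0:ℝ)) := h.2.1
    have h2 : ((0:ℝ), (-1:ℝ), (0:ℝ)) ≤ (m P₁ P₂).val := by
      refine h.2.2 P₂ ?_ le_rfl
      simp [P₁, P₂, Prod.le_def]
    exact le_antisymm h1 h2
  -- the sequence
  have ht0 : ∀ n : ℕ, (0:ℝ) < 1 / (n + 1) := fun n => by positivity
  have ht1 : ∀ n : ℕ, (1:ℝ) / (n + 1) ≤ 1 := fun n => by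
    rw [div_le_one (by positivity)]; linarith [Nat.cast_nonneg (α := ℝ) n]
  set x : ℕ → ↥Y := fun n =>
    ⟨(-(1 / (n + 1)), -(1 / (n + 1)), -(1 / (n + 1))), memY _ (ht0 n).le (ht1 n)⟩ with hx
  set u : ℕ → ↥Y × ↥Y := fun n => (x n, P₂) with hu
  have hux : Filter.Tendsto u Filter.atTop (nhds (P₁, P₂)) := by
    refine Filter.Tendsto.prodMk_nhds ?_ tendsto_const_nhds
    rw [tendsto_subtype_rng]
    have hbase : Filter.Tendsto (fun n : ℕ => (1:ℝ) / (n + 1)) Filter.atTop (nhds 0) :=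
      tendsto_one_div_add_atTop_nhds_zero_nat
    have := hbase.neg
    simp only [neg_zero] at this
    have : Filter.Tendsto (fun n : ℕ =>
        ((-(1 / (n + 1)), -(1 / (n + 1)), -(1 / (n + 1))) : ℝ × ℝ × ℝ)) Filter.atTop
        (nhds ((0:ℝ), (0:ℝ), (0:ℝ))) := by
      exact this.prodMk_nhds (this.prodMk_nhds this)
    exact this
  -- values along the sequence have first coordinate -1
  have hkey : ∀ n : ℕ, (m (x n) P₂).val.1 = -1 := by
    intro n
    have h := hm (x n) P₂
    have hle1 := h.1
    have hle2 := h.2.1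
    have hz2 : (m (x n) P₂).val.2.2 < 0 := lt_of_le_of_lt hle1.2.2 (by show -(1 / ((n:ℝ) + 1)) < 0; linarith [ht0 n])
    have hmem : (m (x n) P₂).val ∈ Y := (m (x n) P₂).2
    rcases hmem with hmem | hmem
    · exact absurd (hT1 hmem) (by simpa using hz2.ne)
    · obtain ⟨heq, hge⟩ := hT2 hmem
      have : (m (x n) P₂).val.2.1 ≤ -1 := hle2.2.1
      have : (m (x n) P₂).val.1 ≤ -1 := heq.trans_le this
      linarith
  -- contradiction
  have hcomp : Filter.Tendsto (fun n => (m (u n).1 (u n).2).val.1) Filter.atTop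
      (nhds ((m P₁ P₂).val.1)) := by
    have h1 := (hc.tendsto).comp hux
    exact ((continuous_subtype_val.fst.tendsto _).comp h1)
  rw [hval] at hcomp
  have : Filter.Tendsto (fun _ : ℕ => (-1:ℝ)) Filter.atTop (nhds 0) := by
    have : (fun n : ℕ => (m (u n).1 (u n).2).val.1) = fun _ => (-1:ℝ) := by
      funext n; exact hkey n
    rwa [this] at hcomp
  have := tendsto_nhds_unique this tendsto_const_nhds
  norm_num at this
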